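/- Let u be the apex of a cone of angle π/3 containing a point v, let a and b be the corners of the canonical (equilateral) triangle ∇ᵤᵛ opposite u, and let m be the midpoint of segment ab. Then max(|ua| + |av|, |ub| + |bv|) = (√3·cos∠muv + sin∠muv)·|uv|, where ∠muv is the angle between uv and the cone bisector um. -/
import Mathlib


open Real EuclideanGeometry RealInnerProductSpace

/-- with `u a b` the canonical equilateral triangle (apex angle `π/3`
at `u`, `v` on the segment `ab`) and `m` the midpoint of `ab`,
`max(|ua|+|av|, |ub|+|bv|) = (√3·cos ∠muv + sin ∠muv)·|uv|`. -/
theorem stmt8 (u a b v m : ℂ)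
    (hab : a ≠ b) (huv : v ≠ u)
    (hiso : dist u a = dist u b)
    (hangle : EuclideanGeometry.angle a u b = π / 3)
    (hv : v ∈ segment ℝ a b)
    (hm : m = midpoint ℝ a b) :
    max (dist u a + dist a v) (dist u b + dist b v) =
      (Real.sqrt 3 * Real.cos (EuclideanGeometry.angle m u v) +
        Real.sin (EuclideanGeometry.angle m u v)) * dist u v := by
  have hau : u ≠ a := by
    rintro rfl
    have h0 : dist u b = 0 := by simpa using hiso.symm
    exact hab (dist_eq_zero.mp h0)
  set s := dist u a with hs_def
  have hs : 0 < s := dist_pos.mpr hau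
  have hsne : s ≠ 0 := hs.ne'
  have hA : ‖a - u‖ = s := by rw [← dist_eq_norm, dist_comm]
  have hB : ‖b - u‖ = s := by rw [← dist_eq_norm, dist_comm]; exact hiso.symm
  have h3 : Real.sqrt 3 ^ 2 = 3 := Real.sq_sqrt (by norm_num)
  -- inner product of the two sides
  have hAB : (⟪a - u, b - u⟫) = s ^ 2 / 2 := by
    have h1 : Real.cos (EuclideanGeometry.angle a u b) = 1 / 2 := by
      rw [hangle, Real.cos_pi_div_three]
    rw [EuclideanGeometry.angle, vsub_eq_sub, vsub_eq_sub,
      InnerProductGeometry.cos_angle, hA, hB, div_eq_iff (by positivity)] at h1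
    rw [h1]; ring
  -- v on the segment
  rw [segment_eq_image'] at hv
  obtain ⟨t, ht, hveq⟩ := hv
  -- the triangle is equilateral
  have hab' : dist a b = s := by
    have h2 : dist a b ^ 2 = s ^ 2 := by
      rw [dist_eq_norm, show a - b = (a - u) - (b - u) by ring,
        norm_sub_sq_real, hA, hB, hAB]
      ring
    rw [← Real.sqrt_sq dist_nonneg, h2, Real.sqrt_sq hs.le]
  have hav : dist a v = t * s := by
    rw [← hveq, dist_eq_norm, show a - (a + t • (b - a)) = (-t) • (b - a) by module,
      norm_smul, Real.norm_eq_abs, abs_neg, abs_of_nonneg ht.1, ← dist_eq_norm,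
      dist_comm, hab']
  have hbv : dist b v = (1 - t) * s := by
    rw [← hveq, dist_eq_norm, show b - (a + t • (b - a)) = (1 - t) • (b - a) by module,
      norm_smul, Real.norm_eq_abs, abs_of_nonneg (by linarith [ht.2]), ← dist_eq_norm,
      dist_comm, hab']
  -- vector decompositions
  have hz : m - u = (2⁻¹ : ℝ) • ((a - u) + (b - u)) := by
    rw [hm, midpoint_eq_smul_add, invOf_eq_inv]
    module
  have hw : v - u = (1 - t) • (a - u) + t • (b - u) := by
    rw [← hveq]; module
  -- inner product computations
  have hzw : (⟪m - u, v - u⟫) = 3 / 4 * s ^ 2 := by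
    rw [hz, hw]
    simp only [inner_add_left, inner_add_right, real_inner_smul_left, real_inner_smul_right,
      norm_add_sq_real, norm_smul, Real.norm_eq_abs, mul_pow, sq_abs,
      real_inner_self_eq_norm_sq, real_inner_comm (a - u) (b - u), hAB, hA, hB]
    ring
  have hz2sq : ‖m - u‖ ^ 2 = 3 / 4 * s ^ 2 := by
    rw [← real_inner_self_eq_norm_sq, hz]
    simp only [inner_add_left, inner_add_right, real_inner_smul_left, real_inner_smul_right,
      norm_add_sq_real, norm_smul, Real.norm_eq_abs, mul_pow, sq_abs,
      real_inner_self_eq_norm_sq, real_inner_comm (a - u) (b - u), hAB, hA, hB]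
    ring
  have hw2 : ‖v - u‖ ^ 2 = s ^ 2 * (t ^ 2 - t + 1) := by
    rw [← real_inner_self_eq_norm_sq, hw]
    simp only [inner_add_left, inner_add_right, real_inner_smul_left, real_inner_smul_right,
      norm_add_sq_real, norm_smul, Real.norm_eq_abs, mul_pow, sq_abs,
      real_inner_self_eq_norm_sq, real_inner_comm (a - u) (b - u), hAB, hA, hB]
    ring
  have hz2 : ‖m - u‖ = Real.sqrt 3 / 2 * s := by
    rw [← Real.sqrt_sq (norm_nonneg _), hz2sq,
      show (3 / 4 * s ^ 2 : ℝ) = (Real.sqrt 3 / 2 * s) ^ 2 by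
        rw [mul_pow, div_pow, h3]; norm_num,
      Real.sqrt_sq (by positivity)]
  have hθ : EuclideanGeometry.angle m u v = InnerProductGeometry.angle (m - u) (v - u) := rfl
  have hcosmul : Real.cos (EuclideanGeometry.angle m u v) * (‖m - u‖ * ‖v - u‖) = 3 / 4 * s ^ 2 := by
    rw [hθ]
    rw [InnerProductGeometry.cos_angle_mul_norm_mul_norm, hzw]
  have hsinmul : Real.sin (EuclideanGeometry.angle m u v) * (‖m - u‖ * ‖v - u‖) = Real.sqrt 3 / 4 * s ^ 2 * |2 * t - 1| := by
    rw [hθ]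
    rw [InnerProductGeometry.sin_angle_mul_norm_mul_norm]
    have habs : |2 * t - 1| ^ 2 = (2 * t - 1) ^ 2 := sq_abs _
    have e : (⟪m - u, m - u⟫) * (⟪v - u, v - u⟫) - (⟪m - u, v - u⟫) * (⟪m - u, v - u⟫)
        = (Real.sqrt 3 / 4 * s ^ 2 * |2 * t - 1|) ^ 2 := by
      rw [real_inner_self_eq_norm_sq, real_inner_self_eq_norm_sq, hzw, hz2sq, hw2]
      linear_combination (-(s ^ 4 * |2 * t - 1| ^ 2 / 16)) * h3 + (-(3 * s ^ 4 / 16)) * habs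
    rw [e, Real.sqrt_sq (by positivity)]
  -- multiply the goal by ‖m - u‖ > 0
  have hzpos : (0 : ℝ) < ‖m - u‖ := by rw [hz2]; positivity
  apply mul_right_cancel₀ hzpos.ne'
  rw [show dist u v = ‖v - u‖ by rw [dist_eq_norm, norm_sub_rev], ← hiso, hav, hbv,
    show (Real.sqrt 3 * Real.cos (EuclideanGeometry.angle m u v) + Real.sin (EuclideanGeometry.angle m u v)) * ‖v - u‖ * ‖m - u‖
      = Real.sqrt 3 * (Real.cos (EuclideanGeometry.angle m u v) * (‖m - u‖ * ‖v - u‖))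
        + Real.sin (EuclideanGeometry.angle m u v) * (‖m - u‖ * ‖v - u‖)
      by ring,
    hcosmul, hsinmul, hz2]
  rcases le_or_gt t (1 / 2) with hhalf | hhalf
  · rw [abs_of_nonpos (by linarith), max_eq_right (by nlinarith)]
    ring
  · rw [abs_of_nonneg (by linarith), max_eq_left (by nlinarith)]
    ring
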